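/- Let c_v > 0, 0 < ϱ₋ < ϱ₊, p₋, p₊ > 0 and v₋ ∈ ℝ, and assume ϱ₁ > ((2c_v+1)ϱ₋ + ϱ₊)/2 + √(ϱ₊² + (4c_v² − 1)ϱ₊ϱ₋)/2. Set R := ϱ₋ − ϱ₊ and, for u > 0: v₊ := v₋ − u, A := ϱ₋v₋ − ϱ₊v₊, B := ϱ₋ϱ₊u² − (ϱ₊ − ϱ₋)(p₊ − p₋), μ₀ := A/R − (1/R)·√(B(ϱ₁−ϱ₊)/(ϱ₁−ϱ₋)), μ₁ := A/R − (1/R)·√(B(ϱ₁−ϱ₋)/(ϱ₁−ϱ₊)), β := (ϱ₊v₊ + μ₁(ϱ₁−ϱ₊))/ϱ₁, Y := ϱ₁ϱ₊·(v₋+μ₀)/(v₋−μ₀) + ϱ₁ϱ₋·(μ₁+v₊)/(μ₁−v₊), X := ϱ₊ϱ₋(p₋ − p₊) + (2c_v+1)ϱ₁(ϱ₋p₊ − ϱ₊p₋), Z := p₊ + ((ϱ₁−ϱ₊)ϱ₊/ϱ₁)·(v₊ − μ₁)², p₁ := (YZ − X)/(Y + ϱ₁R), ε₁ := (ϱ₁RZ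 + X)/(ϱ₁(Y + ϱ₁R)), and ε₂ := (1/(ϱ₁ϱ₊))·[(ϱ₁−ϱ₊)(p₁+p₊) + 2c_v(ϱ₁p₊ − ϱ₊p₁)] + ε₁·((v₊+β)/(v₊−β)·(ϱ₁−ϱ₊)/ϱ₊ − 1). Then there exists u₀ > 0 such that for all u ≥ u₀: ε₂ > 0. -/

import Mathlib

noncomputable section

/-- `B = ϱ₋ϱ₊u² − (ϱ₊ − ϱ₋)(p₊ − p₋)`. -/
def Bu (ϱm ϱp pm pp u : ℝ) : ℝ := ϱm * ϱp * u ^ 2 - (ϱp - ϱm) * (pp - pm)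

/-- The left interface speed `μ₀ = A/R − (1/R)·√(B(ϱ₁−ϱ₊)/(ϱ₁−ϱ₋))`,
with `v₋` fixed and `v₊ = v₋ − u`. -/
def mu0u (ϱm ϱp pm pp ϱ1 vm u : ℝ) : ℝ :=
  (ϱm * vm - ϱp * (vm - u)) / (ϱm - ϱp) -
    (1 / (ϱm - ϱp)) * Real.sqrt (Bu ϱm ϱp pm pp u * ((ϱ1 - ϱp) / (ϱ1 - ϱm)))

/-- The right interface speed `μ₁ = A/R − (1/R)·√(B(ϱ₁−ϱ₋)/(ϱ₁−ϱ₊))`,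
with `v₋` fixed and `v₊ = v₋ − u`. -/
def mu1u (ϱm ϱp pm pp ϱ1 vm u : ℝ) : ℝ :=
  (ϱm * vm - ϱp * (vm - u)) / (ϱm - ϱp) -
    (1 / (ϱm - ϱp)) * Real.sqrt (Bu ϱm ϱp pm pp u * ((ϱ1 - ϱm) / (ϱ1 - ϱp)))

/-- `Y = ϱ₁ϱ₊·(v₋+μ₀)/(v₋−μ₀) + ϱ₁ϱ₋·(μ₁+v₊)/(μ₁−v₊)`. -/
def Yu (ϱm ϱp pm pp ϱ1 vm u : ℝ) : ℝ :=
  ϱ1 * ϱp * ((vm + mu0u ϱm ϱp pm pp ϱ1 vm u) / (vm - mu0u ϱm ϱp pm pp ϱ1 vm u)) +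
  ϱ1 * ϱm * ((mu1u ϱm ϱp pm pp ϱ1 vm u + (vm - u)) /
    (mu1u ϱm ϱp pm pp ϱ1 vm u - (vm - u)))

/-- `X = ϱ₊ϱ₋(p₋ − p₊) + (2c_v+1)ϱ₁(ϱ₋p₊ − ϱ₊p₋)`. -/
def Xu (cv ϱm ϱp pm pp ϱ1 : ℝ) : ℝ :=
  ϱp * ϱm * (pm - pp) + (2 * cv + 1) * ϱ1 * (ϱm * pp - ϱp * pm)

/-- `Z = p₊ + ((ϱ₁−ϱ₊)ϱ₊/ϱ₁)(v₊ − μ₁)²`, with `v₊ = v₋ − u`. -/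
def Zu (ϱm ϱp pm pp ϱ1 vm u : ℝ) : ℝ :=
  pp + ((ϱ1 - ϱp) * ϱp / ϱ1) * ((vm - u) - mu1u ϱm ϱp pm pp ϱ1 vm u) ^ 2

/-- The middle pressure `p₁ = (YZ − X)/(Y + ϱ₁R)` with `R = ϱ₋ − ϱ₊`. -/
def p1u (cv ϱm ϱp pm pp ϱ1 vm u : ℝ) : ℝ :=
  (Yu ϱm ϱp pm pp ϱ1 vm u * Zu ϱm ϱp pm pp ϱ1 vm u - Xu cv ϱm ϱp pm pp ϱ1) /
    (Yu ϱm ϱp pm pp ϱ1 vm u + ϱ1 * (ϱm - ϱp))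

/-- The subsolution parameter `ε₁ = (ϱ₁RZ + X)/(ϱ₁(Y + ϱ₁R))` with `R = ϱ₋ − ϱ₊`. -/
def eps1u (cv ϱm ϱp pm pp ϱ1 vm u : ℝ) : ℝ :=
  (ϱ1 * (ϱm - ϱp) * Zu ϱm ϱp pm pp ϱ1 vm u + Xu cv ϱm ϱp pm pp ϱ1) /
    (ϱ1 * (Yu ϱm ϱp pm pp ϱ1 vm u + ϱ1 * (ϱm - ϱp)))

/-- The second component `β = (ϱ₊v₊ + μ₁(ϱ₁−ϱ₊))/ϱ₁` of the middle velocity,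
with `v₊ = v₋ − u`. -/
def betau (ϱm ϱp pm pp ϱ1 vm u : ℝ) : ℝ :=
  (ϱp * (vm - u) + mu1u ϱm ϱp pm pp ϱ1 vm u * (ϱ1 - ϱp)) / ϱ1

/-- The subsolution parameter `ε₂`. -/
def eps2u (cv ϱm ϱp pm pp ϱ1 vm u : ℝ) : ℝ :=
  (1 / (ϱ1 * ϱp)) *
      ((ϱ1 - ϱp) * (p1u cv ϱm ϱp pm pp ϱ1 vm u + pp) +
        2 * cv * (ϱ1 * pp - ϱp * p1u cv ϱm ϱp pm pp ϱ1 vm u)) +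
    eps1u cv ϱm ϱp pm pp ϱ1 vm u *
      (((vm - u) + betau ϱm ϱp pm pp ϱ1 vm u) /
          ((vm - u) - betau ϱm ϱp pm pp ϱ1 vm u) * ((ϱ1 - ϱp) / ϱp) - 1)

open Filter Topology in
private lemma aux_tendsto_sqrtBk (ϱm ϱp pm pp k : ℝ) :
    Filter.Tendsto (fun u => Real.sqrt (Bu ϱm ϱp pm pp u * k) / u) Filter.atTop
      (nhds (Real.sqrt (ϱm * ϱp * k))) := by
  have h2 : Tendsto (fun u : ℝ => (u ^ 2)⁻¹) atTop (𝓝 0) :=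
    (tendsto_pow_atTop two_ne_zero).inv_tendsto_atTop
  have hB : Tendsto (fun u => Bu ϱm ϱp pm pp u * k / u ^ 2) atTop (𝓝 (ϱm * ϱp * k)) := by
    have h : Tendsto (fun u : ℝ => ϱm * ϱp * k - (ϱp - ϱm) * (pp - pm) * k * (u ^ 2)⁻¹)
        atTop (𝓝 (ϱm * ϱp * k - (ϱp - ϱm) * (pp - pm) * k * 0)) :=
      tendsto_const_nhds.sub (tendsto_const_nhds.mul h2)
    rw [mul_zero, sub_zero] at h
    refine h.congr' ?_
    filter_upwards [eventually_ne_atTop (0 : ℝ)] with u hu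
    field_simp [Bu]
    simp only [Bu]
  have hs : Tendsto (fun u => Real.sqrt (Bu ϱm ϱp pm pp u * k / u ^ 2)) atTop
      (𝓝 (Real.sqrt (ϱm * ϱp * k))) := (Real.continuous_sqrt.tendsto _).comp hB
  refine hs.congr' ?_
  filter_upwards [eventually_gt_atTop (0 : ℝ)] with u hu
  rw [div_eq_mul_inv (Bu ϱm ϱp pm pp u * k), Real.sqrt_mul' _ (by positivity),
    Real.sqrt_inv, Real.sqrt_sq hu.le, div_eq_mul_inv]

open Filter Topology in
private lemma aux_tendsto_mu (ϱm ϱp pm pp vm k : ℝ) (hR : ϱm - ϱp ≠ 0) :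
    Filter.Tendsto (fun u => ((ϱm * vm - ϱp * (vm - u)) / (ϱm - ϱp) -
        (1 / (ϱm - ϱp)) * Real.sqrt (Bu ϱm ϱp pm pp u * k)) / u) Filter.atTop
      (nhds (ϱp / (ϱm - ϱp) - (1 / (ϱm - ϱp)) * Real.sqrt (ϱm * ϱp * k))) := by
  have h1 : Tendsto (fun u : ℝ => vm * u⁻¹ + ϱp / (ϱm - ϱp) -
      (1 / (ϱm - ϱp)) * (Real.sqrt (Bu ϱm ϱp pm pp u * k) / u)) atTop
      (𝓝 (vm * 0 + ϱp / (ϱm - ϱp) - (1 / (ϱm - ϱp)) * Real.sqrt (ϱm * ϱp * k))) :=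
    ((tendsto_const_nhds.mul tendsto_inv_atTop_zero).add tendsto_const_nhds).sub
      (tendsto_const_nhds.mul (aux_tendsto_sqrtBk ϱm ϱp pm pp k))
  rw [mul_zero, zero_add] at h1
  refine h1.congr' ?_
  filter_upwards [eventually_ne_atTop (0 : ℝ)] with u hu
  field_simp
  ring

private lemma aux_pos (cv ϱm ϱp ϱ1 S1 M1 Zv Xc pp Yv Bv Lval : ℝ)
    (hcv : 0 < cv) (hϱm : 0 < ϱm) (hϱmp : ϱm < ϱp) (hqp : 0 < ϱp)
    (hq1 : 0 < ϱ1) (hd2 : (0:ℝ) < ϱ1 - ϱp)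
    (hS1pos : 0 < S1) (hmS1 : ϱm < S1) (hZv : 0 < Zv)
    (hmain2 : (2*cv+1) * S1 < 2*ϱ1 - (2*cv+1)*ϱm)
    (hM1def : M1 = ϱp/(ϱm-ϱp) - (1/(ϱm-ϱp))*S1)
    (hYvdef : Yv = ϱ1*(ϱp-ϱm)*((ϱm+S1)/(ϱm-S1)))
    (hBvdef : Bv = (ϱp * (-1) + M1 * (ϱ1 - ϱp)) / ϱ1)
    (hLdef : Lval = (1 / (ϱ1 * ϱp)) *
        ((ϱ1 - ϱp) * ((Yv * Zv - Xc * 0) / (Yv + ϱ1 * (ϱm - ϱp)) + pp * 0) +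
          2 * cv * (ϱ1 * (pp * 0) - ϱp * ((Yv * Zv - Xc * 0) / (Yv + ϱ1 * (ϱm - ϱp))))) +
      ((ϱ1 * (ϱm - ϱp) * Zv + Xc * 0) / (ϱ1 * (Yv + ϱ1 * (ϱm - ϱp)))) *
        (((-1) + Bv) / ((-1) - Bv) * ((ϱ1 - ϱp) / ϱp) - 1)) :
    0 < Lval := by
  subst hM1def hYvdef hBvdef hLdef
  have hRne : ϱm - ϱp ≠ 0 := by intro h; nlinarith [sub_eq_zero.mp h]
  have hmS1ne : ϱm - S1 ≠ 0 := by intro h; nlinarith [sub_eq_zero.mp h]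
  have hS1mne : S1 - ϱm ≠ 0 := by intro h; nlinarith [sub_eq_zero.mp h]
  have hpmne : ϱp - ϱm ≠ 0 := by intro h; nlinarith [sub_eq_zero.mp h]
  have hq1ne : ϱ1 ≠ 0 := hq1.ne'
  have hqpne : ϱp ≠ 0 := hqp.ne'
  have hS1ne : S1 ≠ 0 := hS1pos.ne'
  have hd2ne : ϱ1 - ϱp ≠ 0 := hd2.ne'
  have hYR : ϱ1*(ϱp-ϱm)*((ϱm+S1)/(ϱm-S1)) + ϱ1 * (ϱm - ϱp)
      = 2*ϱ1*(ϱp-ϱm)*S1/(ϱm-S1) := by field_simp; ring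
  have hP : (ϱ1*(ϱp-ϱm)*((ϱm+S1)/(ϱm-S1)) * Zv - Xc * 0) /
      (ϱ1*(ϱp-ϱm)*((ϱm+S1)/(ϱm-S1)) + ϱ1 * (ϱm - ϱp)) = Zv*(ϱm+S1)/(2*S1) := by
    have hne2 : 2*ϱ1*(ϱp-ϱm)*S1/(ϱm-S1) ≠ 0 :=
      div_ne_zero (by positivity) hmS1ne
    rw [mul_zero, sub_zero, hYR, div_eq_iff hne2]
    field_simp
  have hE : (ϱ1 * (ϱm - ϱp) * Zv + Xc * 0) /
      (ϱ1 * (ϱ1*(ϱp-ϱm)*((ϱm+S1)/(ϱm-S1)) + ϱ1 * (ϱm - ϱp))) = Zv*(S1-ϱm)/(2*S1*ϱ1) := by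
    have hne2 : ϱ1 * (2*ϱ1*(ϱp-ϱm)*S1/(ϱm-S1)) ≠ 0 :=
      mul_ne_zero hq1ne (div_ne_zero (by positivity) hmS1ne)
    rw [mul_zero, add_zero, hYR, div_eq_iff hne2]
    field_simp
    ring
  have hnum : (-1) + ((ϱp * (-1) + (ϱp/(ϱm-ϱp) - (1/(ϱm-ϱp))*S1) * (ϱ1 - ϱp)) / ϱ1)
      = ((ϱ1-ϱp)*(ϱm-S1) - 2*ϱ1*(ϱm-ϱp))/(ϱ1*(ϱm-ϱp)) := by field_simp; ring
  have hden : (-1) - ((ϱp * (-1) + (ϱp/(ϱm-ϱp) - (1/(ϱm-ϱp))*S1) * (ϱ1 - ϱp)) / ϱ1)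
      = ((ϱ1-ϱp)*(S1-ϱm))/(ϱ1*(ϱm-ϱp)) := by field_simp; ring
  rw [hP, hE, hnum, hden, div_div_div_cancel_right₀ (mul_ne_zero hq1ne hRne)]
  have hL : (1 / (ϱ1 * ϱp)) * ((ϱ1 - ϱp) * (Zv*(ϱm+S1)/(2*S1) + pp * 0) +
        2 * cv * (ϱ1 * (pp * 0) - ϱp * (Zv*(ϱm+S1)/(2*S1)))) +
      (Zv*(S1-ϱm)/(2*S1*ϱ1)) *
        ((((ϱ1-ϱp)*(ϱm-S1) - 2*ϱ1*(ϱm-ϱp))/((ϱ1-ϱp)*(S1-ϱm))) * ((ϱ1 - ϱp) / ϱp) - 1)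
      = Zv * (2*ϱ1 - (2*cv+1)*ϱm - (2*cv+1)*S1) / (2*S1*ϱ1) := by
    field_simp
    ring
  rw [hL]
  apply div_pos (mul_pos hZv (by linarith)) (by positivity)

set_option maxHeartbeats 2000000 in
/-- **Lemma (positivity of `ε₂`, case `ϱ₋ < ϱ₊`).** If the middle density `ϱ₁`
satisfies `ϱ₁ > ((2c_v+1)ϱ₋+ϱ₊)/2 + √(ϱ₊² + (4c_v²−1)ϱ₊ϱ₋)/2`, then for
`u = v₋ − v₊` sufficiently large (with `v₋` fixed) one has `ε₂ > 0`. -/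
theorem eps2_positive_large_u
    (cv ϱm ϱp pm pp ϱ1 vm : ℝ)
    (hcv : 0 < cv) (hϱm : 0 < ϱm) (hϱmp : ϱm < ϱp)
    (hpm : 0 < pm) (hpp : 0 < pp)
    (hϱ1 : ((2 * cv + 1) * ϱm + ϱp) / 2 +
        Real.sqrt (ϱp ^ 2 + (4 * cv ^ 2 - 1) * ϱp * ϱm) / 2 < ϱ1) :
    ∃ u0 : ℝ, 0 < u0 ∧ ∀ u : ℝ, u0 ≤ u →
      0 < eps2u cv ϱm ϱp pm pp ϱ1 vm u := by
  classical
  open Filter Topology in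
  -- basic positivity facts
  have hqp : 0 < ϱp := hϱm.trans hϱmp
  have hD : 0 < ϱp ^ 2 + (4 * cv ^ 2 - 1) * ϱp * ϱm := by
    nlinarith [sq_nonneg cv, mul_pos hqp hϱm]
  have hsD : 0 ≤ Real.sqrt (ϱp ^ 2 + (4 * cv ^ 2 - 1) * ϱp * ϱm) := Real.sqrt_nonneg _
  have hsDsq := Real.sq_sqrt hD.le
  have hle : ϱp - (2 * cv + 1) * ϱm ≤ Real.sqrt (ϱp ^ 2 + (4 * cv ^ 2 - 1) * ϱp * ϱm) := by
    nlinarith [hsDsq, hsD, mul_pos hϱm (sub_pos.2 hϱmp), sq_nonneg (2 * cv + 1)]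
  have hq1p : ϱp < ϱ1 := by linarith
  have hq1m : ϱm < ϱ1 := hϱmp.trans hq1p
  have hd2 : (0:ℝ) < ϱ1 - ϱp := by linarith
  have hd1 : (0:ℝ) < ϱ1 - ϱm := by linarith
  have hq1 : (0:ℝ) < ϱ1 := hqp.trans hq1p
  have hRneg : ϱm - ϱp < 0 := by linarith
  have hRne : ϱm - ϱp ≠ 0 := hRneg.ne
  have hmain : Real.sqrt (ϱp ^ 2 + (4 * cv ^ 2 - 1) * ϱp * ϱm)
      < 2 * ϱ1 - (2 * cv + 1) * ϱm - ϱp := by linarith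
  -- the square-root constants
  obtain ⟨S0, hS0def⟩ : ∃ x : ℝ, x = Real.sqrt (ϱm * ϱp * ((ϱ1 - ϱp) / (ϱ1 - ϱm))) := ⟨_, rfl⟩
  obtain ⟨S1, hS1def⟩ : ∃ x : ℝ, x = Real.sqrt (ϱm * ϱp * ((ϱ1 - ϱm) / (ϱ1 - ϱp))) := ⟨_, rfl⟩
  have hS1pos : 0 < S1 := by
    rw [hS1def]; exact Real.sqrt_pos.2 (by positivity)
  have hS1sq : S1 ^ 2 = ϱm * ϱp * ((ϱ1 - ϱm) / (ϱ1 - ϱp)) := by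
    rw [hS1def]; exact Real.sq_sqrt (by positivity)
  have hmS1 : ϱm < S1 := by
    rw [hS1def, ← mul_div_assoc, Real.lt_sqrt hϱm.le, lt_div_iff₀ hd2]
    nlinarith [mul_pos (sub_pos.2 hϱmp) hq1]
  have hS0qp : S0 < ϱp := by
    rw [hS0def, ← mul_div_assoc, Real.sqrt_lt' hqp, div_lt_iff₀ hd1]
    nlinarith [mul_pos (sub_pos.2 hϱmp) hq1]
  have hmS1ne : ϱm - S1 ≠ 0 := by intro h; nlinarith [sub_eq_zero.mp h]
  -- the main inequality on S1
  have hmain2 : (2 * cv + 1) * S1 < 2 * ϱ1 - (2 * cv + 1) * ϱm := by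
    have hkey : ϱp ^ 2 + (4 * cv ^ 2 - 1) * ϱp * ϱm
        < (2 * ϱ1 - (2 * cv + 1) * ϱm - ϱp) ^ 2 := by
      nlinarith [hmain, hsD, hsDsq]
    have h2q1 : 0 < 2 * ϱ1 - (2 * cv + 1) * ϱm := by linarith
    have hsq2 : ((2 * cv + 1) * S1) ^ 2 < (2 * ϱ1 - (2 * cv + 1) * ϱm) ^ 2 := by
      have hexp : ((2 * cv + 1) * S1) ^ 2
          = (2 * cv + 1) ^ 2 * (ϱm * ϱp * ((ϱ1 - ϱm) / (ϱ1 - ϱp))) := by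
        rw [mul_pow, hS1sq]
      rw [hexp, ← mul_div_assoc, ← mul_div_assoc, div_lt_iff₀ hd2]
      nlinarith [mul_pos hq1 (sub_pos.2 hkey)]
    nlinarith [hS1pos, h2q1, mul_pos hcv hS1pos]
  -- limit constants
  obtain ⟨M0, hM0def⟩ : ∃ x : ℝ, x = ϱp / (ϱm - ϱp) - (1 / (ϱm - ϱp)) * S0 := ⟨_, rfl⟩
  obtain ⟨M1, hM1def⟩ : ∃ x : ℝ, x = ϱp / (ϱm - ϱp) - (1 / (ϱm - ϱp)) * S1 := ⟨_, rfl⟩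
  have hM0neg : M0 < 0 := by
    have : M0 = (ϱp - S0) / (ϱm - ϱp) := by rw [hM0def]; ring
    rw [this]
    exact div_neg_of_pos_of_neg (by linarith) hRneg
  have hM0ne : M0 ≠ 0 := hM0neg.ne
  have hM1add : M1 + 1 = (ϱm - S1) / (ϱm - ϱp) := by
    rw [hM1def]; field_simp; ring
  have hM1sub : M1 - 1 = (2 * ϱp - ϱm - S1) / (ϱm - ϱp) := by
    rw [hM1def]; field_simp; ring
  have hM1addpos : 0 < M1 + 1 := by
    rw [hM1add]; exact div_pos_of_neg_of_neg (by linarith) hRneg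
  obtain ⟨Yv, hYvdef⟩ : ∃ x : ℝ, x = ϱ1 * (ϱp - ϱm) * ((ϱm + S1) / (ϱm - S1)) := ⟨_, rfl⟩
  obtain ⟨Zv, hZvdef⟩ : ∃ x : ℝ, x = ((ϱ1 - ϱp) * ϱp / ϱ1) * ((-1) - M1) ^ 2 := ⟨_, rfl⟩
  obtain ⟨Bv, hBvdef⟩ : ∃ x : ℝ, x = (ϱp * (-1) + M1 * (ϱ1 - ϱp)) / ϱ1 := ⟨_, rfl⟩
  have hZvpos : 0 < Zv := by
    rw [hZvdef]
    have hne : (-1) - M1 ≠ 0 := by intro h; nlinarith [sub_eq_zero.mp h]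
    exact mul_pos (by positivity) (pow_two_pos_of_ne_zero hne)
  have hYRval : Yv + ϱ1 * (ϱm - ϱp) = 2 * ϱ1 * (ϱp - ϱm) * S1 / (ϱm - S1) := by
    rw [hYvdef]; field_simp; ring
  have hYRne : Yv + ϱ1 * (ϱm - ϱp) ≠ 0 := by
    rw [hYRval]
    exact div_ne_zero
      (mul_pos (mul_pos (by linarith : (0:ℝ) < 2 * ϱ1) (sub_pos.2 hϱmp)) hS1pos).ne' hmS1ne
  have hBvden : (-1) - Bv = ((ϱ1 - ϱp) * (S1 - ϱm)) / (ϱ1 * (ϱm - ϱp)) := by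
    rw [hBvdef, hM1def]; field_simp; ring
  have hBvdenne : (-1) - Bv ≠ 0 := by
    rw [hBvden]
    exact div_ne_zero (mul_ne_zero hd2.ne' (by intro h; nlinarith [sub_eq_zero.mp h]))
      (mul_ne_zero hq1.ne' hRne)
  -- basic tendsto facts
  have h2inv : Tendsto (fun u : ℝ => (u ^ 2)⁻¹) atTop (𝓝 0) :=
    (tendsto_pow_atTop two_ne_zero).inv_tendsto_atTop
  have hvmdiv : Tendsto (fun u : ℝ => vm / u) atTop (𝓝 0) := by
    have h : Tendsto (fun u : ℝ => vm * u⁻¹) atTop (𝓝 (vm * 0)) :=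
      tendsto_const_nhds.mul tendsto_inv_atTop_zero
    rw [mul_zero] at h
    exact h.congr fun u => (div_eq_mul_inv vm u).symm
  have hvp : Tendsto (fun u : ℝ => (vm - u) / u) atTop (𝓝 (-1)) := by
    have h : Tendsto (fun u : ℝ => vm * u⁻¹ - 1) atTop (𝓝 (vm * 0 - 1)) :=
      (tendsto_const_nhds.mul tendsto_inv_atTop_zero).sub tendsto_const_nhds
    rw [mul_zero, zero_sub] at h
    refine h.congr' ?_
    filter_upwards [eventually_ne_atTop (0 : ℝ)] with u hu
    field_simp
  -- speeds
  have hmu0 : Tendsto (fun u => mu0u ϱm ϱp pm pp ϱ1 vm u / u) atTop (𝓝 M0) := by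
    rw [hM0def, hS0def]
    exact aux_tendsto_mu ϱm ϱp pm pp vm _ hRne
  have hmu1 : Tendsto (fun u => mu1u ϱm ϱp pm pp ϱ1 vm u / u) atTop (𝓝 M1) := by
    rw [hM1def, hS1def]
    exact aux_tendsto_mu ϱm ϱp pm pp vm _ hRne
  -- Y
  have hr0 : Tendsto (fun u => (vm + mu0u ϱm ϱp pm pp ϱ1 vm u) /
      (vm - mu0u ϱm ϱp pm pp ϱ1 vm u)) atTop (𝓝 ((0 + M0) / (0 - M0))) := by
    have hnum : Tendsto (fun u => (vm + mu0u ϱm ϱp pm pp ϱ1 vm u) / u) atTop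
        (𝓝 (0 + M0)) := (hvmdiv.add hmu0).congr fun u => (add_div _ _ _).symm
    have hden : Tendsto (fun u => (vm - mu0u ϱm ϱp pm pp ϱ1 vm u) / u) atTop
        (𝓝 (0 - M0)) := (hvmdiv.sub hmu0).congr fun u => (sub_div _ _ _).symm
    have hne : (0 : ℝ) - M0 ≠ 0 := by simpa using neg_ne_zero.2 hM0ne
    refine (hnum.div hden hne).congr' ?_
    filter_upwards [eventually_ne_atTop (0 : ℝ)] with u hu
    exact div_div_div_cancel_right₀ hu _ _
  have hr1 : Tendsto (fun u => (mu1u ϱm ϱp pm pp ϱ1 vm u + (vm - u)) /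
      (mu1u ϱm ϱp pm pp ϱ1 vm u - (vm - u))) atTop (𝓝 ((M1 + (-1)) / (M1 - (-1)))) := by
    have hnum : Tendsto (fun u => (mu1u ϱm ϱp pm pp ϱ1 vm u + (vm - u)) / u) atTop
        (𝓝 (M1 + (-1))) := (hmu1.add hvp).congr fun u => (add_div _ _ _).symm
    have hden : Tendsto (fun u => (mu1u ϱm ϱp pm pp ϱ1 vm u - (vm - u)) / u) atTop
        (𝓝 (M1 - (-1))) := (hmu1.sub hvp).congr fun u => (sub_div _ _ _).symm
    have hne : M1 - (-1) ≠ 0 := by rw [sub_neg_eq_add]; exact hM1addpos.ne'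
    refine (hnum.div hden hne).congr' ?_
    filter_upwards [eventually_ne_atTop (0 : ℝ)] with u hu
    exact div_div_div_cancel_right₀ hu _ _
  have hY : Tendsto (fun u => Yu ϱm ϱp pm pp ϱ1 vm u) atTop (𝓝 Yv) := by
    have h := (hr0.const_mul (ϱ1 * ϱp)).add (hr1.const_mul (ϱ1 * ϱm))
    have hval : ϱ1 * ϱp * ((0 + M0) / (0 - M0)) + ϱ1 * ϱm * ((M1 + (-1)) / (M1 - (-1)))
        = Yv := by
      rw [zero_add, zero_sub, div_neg, div_self hM0ne, sub_neg_eq_add, ← sub_eq_add_neg,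
        hM1sub, hM1add, div_div_div_cancel_right₀ hRne, hYvdef]
      field_simp
      ring
    rw [← hval]
    exact h.congr fun u => rfl
  -- Z
  have hZ : Tendsto (fun u => Zu ϱm ϱp pm pp ϱ1 vm u / u ^ 2) atTop (𝓝 Zv) := by
    have hdv : Tendsto (fun u => ((vm - u) - mu1u ϱm ϱp pm pp ϱ1 vm u) / u) atTop
        (𝓝 ((-1) - M1)) := (hvp.sub hmu1).congr fun u => (sub_div _ _ _).symm
    have h : Tendsto (fun u : ℝ => pp * (u ^ 2)⁻¹ + ((ϱ1 - ϱp) * ϱp / ϱ1) *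
        (((vm - u) - mu1u ϱm ϱp pm pp ϱ1 vm u) / u) ^ 2) atTop
        (𝓝 (pp * 0 + ((ϱ1 - ϱp) * ϱp / ϱ1) * ((-1) - M1) ^ 2)) :=
      (tendsto_const_nhds.mul h2inv).add (tendsto_const_nhds.mul (hdv.pow 2))
    rw [mul_zero, zero_add, ← hZvdef] at h
    exact h.congr fun u => by simp only [Zu]; ring
  -- p1 and eps1
  have hdenY : Tendsto (fun u => Yu ϱm ϱp pm pp ϱ1 vm u + ϱ1 * (ϱm - ϱp)) atTop
      (𝓝 (Yv + ϱ1 * (ϱm - ϱp))) := hY.add tendsto_const_nhds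
  have hp1 : Tendsto (fun u => p1u cv ϱm ϱp pm pp ϱ1 vm u / u ^ 2) atTop
      (𝓝 ((Yv * Zv - Xu cv ϱm ϱp pm pp ϱ1 * 0) / (Yv + ϱ1 * (ϱm - ϱp)))) := by
    have hnum : Tendsto (fun u => Yu ϱm ϱp pm pp ϱ1 vm u * (Zu ϱm ϱp pm pp ϱ1 vm u / u ^ 2)
        - Xu cv ϱm ϱp pm pp ϱ1 * (u ^ 2)⁻¹) atTop
        (𝓝 (Yv * Zv - Xu cv ϱm ϱp pm pp ϱ1 * 0)) :=
      (hY.mul hZ).sub (tendsto_const_nhds.mul h2inv)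
    refine (hnum.div hdenY hYRne).congr fun u => ?_
    simp only [Pi.div_apply, p1u]
    ring
  have he1 : Tendsto (fun u => eps1u cv ϱm ϱp pm pp ϱ1 vm u / u ^ 2) atTop
      (𝓝 ((ϱ1 * (ϱm - ϱp) * Zv + Xu cv ϱm ϱp pm pp ϱ1 * 0) /
        (ϱ1 * (Yv + ϱ1 * (ϱm - ϱp))))) := by
    have hnum : Tendsto (fun u => ϱ1 * (ϱm - ϱp) * (Zu ϱm ϱp pm pp ϱ1 vm u / u ^ 2)
        + Xu cv ϱm ϱp pm pp ϱ1 * (u ^ 2)⁻¹) atTop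
        (𝓝 (ϱ1 * (ϱm - ϱp) * Zv + Xu cv ϱm ϱp pm pp ϱ1 * 0)) :=
      (tendsto_const_nhds.mul hZ).add (tendsto_const_nhds.mul h2inv)
    have hden : Tendsto (fun u => ϱ1 * (Yu ϱm ϱp pm pp ϱ1 vm u + ϱ1 * (ϱm - ϱp))) atTop
        (𝓝 (ϱ1 * (Yv + ϱ1 * (ϱm - ϱp)))) := tendsto_const_nhds.mul hdenY
    refine (hnum.div hden (mul_ne_zero hq1.ne' hYRne)).congr fun u => ?_
    simp only [Pi.div_apply, eps1u]
    ring
  -- beta and the ratio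
  have hbeta : Tendsto (fun u => betau ϱm ϱp pm pp ϱ1 vm u / u) atTop (𝓝 Bv) := by
    have h : Tendsto (fun u => (ϱp * ((vm - u) / u) +
        (mu1u ϱm ϱp pm pp ϱ1 vm u / u) * (ϱ1 - ϱp)) / ϱ1) atTop
        (𝓝 ((ϱp * (-1) + M1 * (ϱ1 - ϱp)) / ϱ1)) :=
      ((hvp.const_mul ϱp).add (hmu1.mul_const (ϱ1 - ϱp))).div_const ϱ1
    rw [← hBvdef] at h
    exact h.congr fun u => by simp only [betau]; ring
  have hrat : Tendsto (fun u => ((vm - u) + betau ϱm ϱp pm pp ϱ1 vm u) /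
      ((vm - u) - betau ϱm ϱp pm pp ϱ1 vm u)) atTop (𝓝 (((-1) + Bv) / ((-1) - Bv))) := by
    have hnum : Tendsto (fun u => ((vm - u) + betau ϱm ϱp pm pp ϱ1 vm u) / u) atTop
        (𝓝 ((-1) + Bv)) := (hvp.add hbeta).congr fun u => (add_div _ _ _).symm
    have hden : Tendsto (fun u => ((vm - u) - betau ϱm ϱp pm pp ϱ1 vm u) / u) atTop
        (𝓝 ((-1) - Bv)) := (hvp.sub hbeta).congr fun u => (sub_div _ _ _).symm
    refine (hnum.div hden hBvdenne).congr' ?_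
    filter_upwards [eventually_ne_atTop (0 : ℝ)] with u hu
    exact div_div_div_cancel_right₀ hu _ _
  -- assembling eps2
  obtain ⟨Lval, hLdef⟩ : ∃ x : ℝ, x = (1 / (ϱ1 * ϱp)) *
      ((ϱ1 - ϱp) * ((Yv * Zv - Xu cv ϱm ϱp pm pp ϱ1 * 0) / (Yv + ϱ1 * (ϱm - ϱp)) + pp * 0) +
        2 * cv * (ϱ1 * (pp * 0) -
          ϱp * ((Yv * Zv - Xu cv ϱm ϱp pm pp ϱ1 * 0) / (Yv + ϱ1 * (ϱm - ϱp))))) +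
      ((ϱ1 * (ϱm - ϱp) * Zv + Xu cv ϱm ϱp pm pp ϱ1 * 0) / (ϱ1 * (Yv + ϱ1 * (ϱm - ϱp)))) *
        (((-1) + Bv) / ((-1) - Bv) * ((ϱ1 - ϱp) / ϱp) - 1) := ⟨_, rfl⟩
  have heps2 : Tendsto (fun u => eps2u cv ϱm ϱp pm pp ϱ1 vm u / u ^ 2) atTop (𝓝 Lval) := by
    have t1 : Tendsto (fun u => (1 / (ϱ1 * ϱp)) *
        ((ϱ1 - ϱp) * (p1u cv ϱm ϱp pm pp ϱ1 vm u / u ^ 2 + pp * (u ^ 2)⁻¹) +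
          2 * cv * (ϱ1 * (pp * (u ^ 2)⁻¹) - ϱp * (p1u cv ϱm ϱp pm pp ϱ1 vm u / u ^ 2))))
        atTop (𝓝 ((1 / (ϱ1 * ϱp)) *
        ((ϱ1 - ϱp) * ((Yv * Zv - Xu cv ϱm ϱp pm pp ϱ1 * 0) / (Yv + ϱ1 * (ϱm - ϱp)) + pp * 0) +
          2 * cv * (ϱ1 * (pp * 0) -
            ϱp * ((Yv * Zv - Xu cv ϱm ϱp pm pp ϱ1 * 0) / (Yv + ϱ1 * (ϱm - ϱp))))))) :=
      tendsto_const_nhds.mul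
        ((tendsto_const_nhds.mul (hp1.add (tendsto_const_nhds.mul h2inv))).add
          (tendsto_const_nhds.mul
            ((tendsto_const_nhds.mul (tendsto_const_nhds.mul h2inv)).sub
              (tendsto_const_nhds.mul hp1))))
    have t2 : Tendsto (fun u => (eps1u cv ϱm ϱp pm pp ϱ1 vm u / u ^ 2) *
        (((vm - u) + betau ϱm ϱp pm pp ϱ1 vm u) /
          ((vm - u) - betau ϱm ϱp pm pp ϱ1 vm u) * ((ϱ1 - ϱp) / ϱp) - 1)) atTop
        (𝓝 (((ϱ1 * (ϱm - ϱp) * Zv + Xu cv ϱm ϱp pm pp ϱ1 * 0) /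
            (ϱ1 * (Yv + ϱ1 * (ϱm - ϱp)))) *
          (((-1) + Bv) / ((-1) - Bv) * ((ϱ1 - ϱp) / ϱp) - 1))) :=
      he1.mul ((hrat.mul_const _).sub tendsto_const_nhds)
    have h := t1.add t2
    rw [← hLdef] at h
    refine (h.congr fun u => ?_)
    simp only [eps2u]
    ring
  -- conclusion
  have hLpos : 0 < Lval :=
    aux_pos cv ϱm ϱp ϱ1 S1 M1 Zv (Xu cv ϱm ϱp pm pp ϱ1) pp Yv Bv Lval hcv hϱm hϱmp hqp
      hq1 hd2 hS1pos hmS1 hZvpos hmain2 hM1def hYvdef hBvdef hLdef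
  have hev : ∀ᶠ u in atTop, 0 < eps2u cv ϱm ϱp pm pp ϱ1 vm u / u ^ 2 :=
    heps2.eventually (eventually_gt_nhds hLpos)
  have hev2 : ∀ᶠ u : ℝ in atTop, 0 < u := eventually_gt_atTop 0
  obtain ⟨a, ha⟩ := (hev.and hev2).exists_forall_of_atTop
  refine ⟨max a 1, lt_of_lt_of_le one_pos (le_max_right a 1), fun u hu => ?_⟩
  obtain ⟨h1, h2⟩ := ha u (le_trans (le_max_left a 1) hu)
  have hu2 : (0:ℝ) < u ^ 2 := by positivity
  have := mul_pos h1 hu2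
  rwa [div_mul_cancel₀] at this
  exact hu2.ne'
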